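/- For every positive integer n and every n×n complex matrix A, the permanent satisfies |Per(A)| ≤ ‖A‖^n; in particular, if ‖A‖ ≤ 1 then |Per(A)| ≤ 1. -/

import Mathlib

open scoped Matrix.Norms.L2Operator
open Finset
open scoped Matrix

/-- The permanent of an `n × n` complex matrix. -/
noncomputable def permanent {n : ℕ} (A : Matrix (Fin n) (Fin n) ℂ) : ℂ :=
  ∑ σ : Equiv.Perm (Fin n), ∏ i, A i (σ i)

/-- The `±1` sign attached to a Boolean vector. -/
noncomputable def sg {n : ℕ} (δ : Fin n → Bool) (i : Fin n) : ℂ := if δ i then 1 else -1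

lemma sg_abs {n : ℕ} (δ : Fin n → Bool) (i : Fin n) : ‖sg δ i‖ = 1 := by
  unfold sg; split <;> simp

lemma sum_bool_pow (m : ℕ) :
    ∑ b : Bool, (if b then (1:ℂ) else -1) ^ (m + 1) = if Odd m then 2 else 0 := by
  rcases Nat.even_or_odd m with h | h
  · obtain ⟨k, rfl⟩ := h
    rw [if_neg (Nat.not_odd_iff_even.2 ⟨k, rfl⟩)]
    simp [pow_succ, pow_add, pow_mul, ← mul_pow]
  · obtain ⟨k, rfl⟩ := h
    rw [if_pos ⟨k, rfl⟩]
    simp [pow_succ, pow_add, pow_mul, ← mul_pow]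

lemma sum_sg {n : ℕ} (f : Fin n → Fin n) :
    ∑ δ : Fin n → Bool, ((∏ i, sg δ i) * ∏ j, sg δ (f j))
      = if Function.Bijective f then (2:ℂ) ^ n else 0 := by
  classical
  set m : Fin n → ℕ := fun i => (univ.filter fun j => f j = i).card with hm
  have h1 : ∀ δ : Fin n → Bool, ((∏ i, sg δ i) * ∏ j, sg δ (f j)) = ∏ i, sg δ i ^ (m i + 1) := by
    intro δ
    rw [← Finset.prod_fiberwise' univ f (sg δ)]
    simp only [Finset.prod_const, ← Finset.prod_mul_distrib]
    exact Finset.prod_congr rfl fun i _ => by rw [pow_succ]; ring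
  simp only [h1]
  rw [show (∑ δ : Fin n → Bool, ∏ i, sg δ i ^ (m i + 1))
      = ∏ i, ∑ b : Bool, (if b then (1:ℂ) else -1) ^ (m i + 1) by
    rw [← Finset.sum_prod_piFinset, Fintype.piFinset_univ]; rfl]
  simp only [sum_bool_pow]
  by_cases hb : Function.Bijective f
  · have hmi : ∀ i, m i = 1 := by
      intro i
      rw [hm, Finset.card_eq_one]
      obtain ⟨j, hj⟩ := hb.2 i
      exact ⟨j, by ext k; simp [hb.1.eq_iff, ← hj, eq_comm]⟩
    rw [if_pos hb]
    have : ∀ i : Fin n, (if Odd (m i) then (2:ℂ) else 0) = 2 := fun i => by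
      rw [hmi i]; norm_num
    simp only [this, Finset.prod_const, Finset.card_univ, Fintype.card_fin]
  · rw [if_neg hb]
    have hns : ¬ Function.Surjective f := fun hs => hb (Finite.surjective_iff_bijective.1 hs)
    simp only [Function.Surjective, not_forall] at hns
    obtain ⟨i, hi⟩ := hns
    push_neg at hi
    refine Finset.prod_eq_zero (Finset.mem_univ i) ?_
    have : m i = 0 := by
      rw [hm, Finset.card_eq_zero]
      ext j; simp [hi j]
    simp [this]

/-- Glynn-type polarization identity for the permanent. -/
lemma glynn {n : ℕ} (A : Matrix (Fin n) (Fin n) ℂ) :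
    ∑ δ : Fin n → Bool, ((∏ i, sg δ i) * ∏ j, (∑ i, sg δ i * A i j))
      = 2 ^ n * permanent A := by
  classical
  have h1 : ∀ δ : Fin n → Bool,
      ((∏ i, sg δ i) * ∏ j, (∑ i, sg δ i * A i j))
        = ∑ f : Fin n → Fin n, ((∏ i, sg δ i) * ∏ j, sg δ (f j)) * ∏ j, A (f j) j := by
    intro δ
    rw [Fintype.prod_sum (fun j i => sg δ i * A i j), Finset.mul_sum]
    exact Finset.sum_congr rfl fun f _ => by rw [Finset.prod_mul_distrib]; ring
  simp only [h1]
  rw [Finset.sum_comm]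
  have h2 : ∀ f : Fin n → Fin n,
      ∑ δ : Fin n → Bool, ((∏ i, sg δ i) * ∏ j, sg δ (f j)) * ∏ j, A (f j) j
        = (if Function.Bijective f then (2:ℂ) ^ n else 0) * ∏ j, A (f j) j := by
    intro f; rw [← Finset.sum_mul, sum_sg]
  simp only [h2, ite_mul, zero_mul]
  rw [Finset.sum_ite, Finset.sum_const_zero, add_zero, ← Finset.mul_sum]
  congr 1
  rw [show permanent A = ∑ σ : Equiv.Perm (Fin n), ∏ j, A (σ j) j by
    rw [permanent, ← Equiv.sum_comp (Equiv.inv (Equiv.Perm (Fin n))) (fun σ => ∏ i, A i (σ i))]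
    refine Finset.sum_congr rfl fun σ _ => ?_
    rw [← Equiv.prod_comp σ (fun i => A i ((Equiv.inv (Equiv.Perm (Fin n)) σ) i))]
    simp]
  symm
  refine Finset.sum_bij (fun σ _ => (σ : Fin n → Fin n)) ?_ ?_ ?_ ?_
  · intro σ _; exact Finset.mem_filter.2 ⟨Finset.mem_univ _, σ.bijective⟩
  · intro σ _ τ _ h; exact Equiv.coe_fn_injective h
  · intro f hf
    rw [Finset.mem_filter] at hf
    exact ⟨Equiv.ofBijective f hf.2, Finset.mem_univ _, rfl⟩
  · intro σ _; rfl

lemma term_bound {n : ℕ} (hn : 0 < n) (A : Matrix (Fin n) (Fin n) ℂ) (δ : Fin n → Bool) :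
    ‖∏ j, ∑ i, sg δ i * A i j‖ ≤ ‖A‖ ^ n := by
  classical
  set x : Fin n → ℂ := fun j => ∑ i, sg δ i * A i j with hx
  have hA : (0:ℝ) ≤ ‖A‖ := norm_nonneg _
  set y : EuclideanSpace ℂ (Fin n) := WithLp.toLp 2 (fun i => sg δ i) with hy
  have hynorm : ‖y‖ = Real.sqrt n := by
    rw [EuclideanSpace.norm_eq]
    congr 1
    simp [hy, sg_abs]
  have hconj : ∀ j, (Matrix.mulVec Aᴴ (y : Fin n → ℂ)) j = starRingEnd ℂ (x j) := by
    intro j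
    simp only [Matrix.mulVec, dotProduct, Matrix.conjTranspose_apply, hx, map_sum,
      _root_.map_mul]
    refine Finset.sum_congr rfl fun i _ => ?_
    have h5 : starRingEnd ℂ (sg δ i) = sg δ i := by unfold sg; split <;> simp
    rw [h5]
    simp only [hy, Complex.star_def, mul_comm]
  have hbound : ∑ j, ‖x j‖ ^ 2 ≤ n * ‖A‖ ^ 2 := by
    have h1 := Matrix.l2_opNorm_mulVec Aᴴ y
    rw [Matrix.l2_opNorm_conjTranspose, hynorm] at h1
    have h2 : ‖(EuclideanSpace.equiv (Fin n) ℂ).symm (Matrix.mulVec Aᴴ (y : Fin n → ℂ))‖ ^ 2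
        = ∑ j, ‖x j‖ ^ 2 := by
      rw [EuclideanSpace.norm_eq, Real.sq_sqrt (by positivity)]
      refine Finset.sum_congr rfl fun j _ => ?_
      simp [hconj j]
    have h3 : ‖(EuclideanSpace.equiv (Fin n) ℂ).symm (Matrix.mulVec Aᴴ (y : Fin n → ℂ))‖ ^ 2
        ≤ (‖A‖ * Real.sqrt n) ^ 2 := by
      apply pow_le_pow_left₀ (norm_nonneg _) h1
    rw [h2] at h3
    calc ∑ j, ‖x j‖ ^ 2 ≤ (‖A‖ * Real.sqrt n) ^ 2 := h3
      _ = n * ‖A‖ ^ 2 := by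
          rw [mul_pow, Real.sq_sqrt (by positivity)]; ring
  have hprod : ∏ j, ‖x j‖ ^ 2 ≤ (‖A‖ ^ 2) ^ n := by
    have hz : ∀ j ∈ univ, (0:ℝ) ≤ ‖x j‖ ^ 2 := fun j _ => by positivity
    have hw : ∀ j ∈ (univ : Finset (Fin n)), (0:ℝ) ≤ (1:ℝ) := fun _ _ => zero_le_one
    have hsw : (0:ℝ) < ∑ _j : Fin n, (1:ℝ) := by
      simp [Finset.card_univ]; exact_mod_cast hn
    have hgm := Real.geom_mean_le_arith_mean univ (fun _ => (1:ℝ))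
      (fun j => ‖x j‖ ^ 2) hw hsw hz
    simp only [Real.rpow_one, one_mul] at hgm
    have hsum1 : ∑ _j : Fin n, (1:ℝ) = n := by simp
    rw [hsum1] at hgm
    have hrhs : (∑ j, ‖x j‖ ^ 2) / (n:ℝ) ≤ ‖A‖ ^ 2 := by
      rw [div_le_iff₀ (by exact_mod_cast hn)]
      linarith [hbound]
    have h4 : ((∏ j, ‖x j‖ ^ 2) ^ ((n:ℝ)⁻¹)) ^ (n:ℕ) ≤ (‖A‖ ^ 2) ^ (n:ℕ) :=
      pow_le_pow_left₀ (Real.rpow_nonneg (Finset.prod_nonneg hz) _) (hgm.trans hrhs) n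
    rwa [← Real.rpow_natCast ((∏ j, ‖x j‖ ^ 2) ^ ((n:ℝ)⁻¹)) n,
      ← Real.rpow_mul (Finset.prod_nonneg hz), inv_mul_cancel₀ (by exact_mod_cast hn.ne'),
      Real.rpow_one] at h4
  rw [norm_prod]
  have habs : ∀ j ∈ univ, (0:ℝ) ≤ ‖x j‖ := fun j _ => norm_nonneg _
  have := pow_le_pow_iff_left₀ (Finset.prod_nonneg habs) (pow_nonneg hA n) (two_ne_zero)
  apply this.1
  calc (∏ j, ‖x j‖) ^ 2 = ∏ j, ‖x j‖ ^ 2 := by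
        rw [← Finset.prod_pow]
    _ ≤ (‖A‖ ^ 2) ^ n := hprod
    _ = (‖A‖ ^ n) ^ 2 := by ring

/-- For every positive `n` and every `n × n` complex matrix `A`, the permanent satisfies
`|Per(A)| ≤ ‖A‖ⁿ` (with `‖A‖` the ℓ² → ℓ² operator norm); in particular, if `‖A‖ ≤ 1`
then `|Per(A)| ≤ 1`. -/
theorem abs_permanent_le_opNorm_pow (n : ℕ) (hn : 0 < n) (A : Matrix (Fin n) (Fin n) ℂ) :
    ‖permanent A‖ ≤ ‖A‖ ^ n ∧ (‖A‖ ≤ 1 → ‖permanent A‖ ≤ 1) := by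
  have hmain : ‖permanent A‖ ≤ ‖A‖ ^ n := by
    have hg := congrArg (‖·‖) (glynn A)
    rw [norm_mul] at hg
    have h2n : ‖(2:ℂ) ^ n‖ = 2 ^ n := by
      rw [norm_pow]; norm_num
    rw [h2n] at hg
    have hle : ‖∑ δ : Fin n → Bool, ((∏ i, sg δ i) * ∏ j, (∑ i, sg δ i * A i j))‖
        ≤ 2 ^ n * ‖A‖ ^ n := by
      refine (norm_sum_le _ _).trans ?_
      have hterm : ∀ δ : Fin n → Bool,
          ‖(∏ i, sg δ i) * ∏ j, (∑ i, sg δ i * A i j)‖ ≤ ‖A‖ ^ n := by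
        intro δ
        rw [norm_mul, norm_prod]
        simp only [sg_abs, Finset.prod_const_one, one_mul]
        exact term_bound hn A δ
      refine (Finset.sum_le_sum fun δ _ => hterm δ).trans ?_
      rw [Finset.sum_const, Finset.card_univ, nsmul_eq_mul]
      have : Fintype.card (Fin n → Bool) = 2 ^ n := by
        simp [Fintype.card_fun]
      rw [this]
      push_cast
      exact le_refl _
    rw [hg] at hle
    have h2pos : (0:ℝ) < 2 ^ n := by positivity
    calc ‖permanent A‖
        = (2 ^ n * ‖permanent A‖) / 2 ^ n := by field_simp
      _ ≤ (2 ^ n * ‖A‖ ^ n) / 2 ^ n := by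
          exact div_le_div_of_nonneg_right hle h2pos.le
      _ = ‖A‖ ^ n := by field_simp
  refine ⟨hmain, fun h1 => hmain.trans (pow_le_one₀ (norm_nonneg _) h1)⟩
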